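/- Let F(X) be a free group on a finite set X with |X| ≥ 2, let A * B be a free splitting of F whose basis is X (i.e., X = X_A ⊔ X_B with A = ⟨X_A⟩, B = ⟨X_B⟩), let ν be an elementary Nielsen transformation, and let C * D be a free splitting with basis ν(X). Then there exists x ∈ X that is elliptic to both A * B and C * D; in particular, the distance between [A*B] and [C*D] in the ellipticity graph is at most two. -/

import Mathlib

open FreeGroup

/-- `(A, B)` is a free splitting of `F`: the natural map from the free product `A ∗ B`
to `F` is an isomorphism (internal free product). -/
def IsFreeSplitting {F : Type} [Group F] (A B : Subgroup F) : Prop :=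
  Function.Bijective (Monoid.Coprod.lift A.subtype B.subtype)

/-- `g` is elliptic to the splitting `A * B`: `g` lies in a conjugate of `A` or of `B`. -/
def Elliptic {F : Type} [Group F] (A B : Subgroup F) (g : F) : Prop :=
  ∃ y : F, y * g * y⁻¹ ∈ A ∨ y * g * y⁻¹ ∈ B

/-- A cyclic word (conjugacy class) is elliptic to `A * B` if some representative lies in
`A` or in `B`. -/
def EllipticC {F : Type} [Group F] (A B : Subgroup F) (c : ConjClasses F) : Prop :=
  ∃ g : F, ConjClasses.mk g = c ∧ (g ∈ A ∨ g ∈ B)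

/-- A proper free splitting of `F`, as data. -/
def ProperSplitting (F : Type) [Group F] : Type :=
  {p : Subgroup F × Subgroup F // IsFreeSplitting p.1 p.2 ∧ p.1 ≠ ⊤ ∧ p.2 ≠ ⊤}

/-- Equivalence of proper free splittings: simultaneous conjugation, possibly swapping
the two factors. -/
def splitRel {F : Type} [Group F] (p q : ProperSplitting F) : Prop :=
  ∃ x : F,
    (q.1.1 = Subgroup.map (MulAut.conj x).toMonoidHom p.1.1 ∧
     q.1.2 = Subgroup.map (MulAut.conj x).toMonoidHom p.1.2) ∨
    (q.1.1 = Subgroup.map (MulAut.conj x).toMonoidHom p.1.2 ∧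
     q.1.2 = Subgroup.map (MulAut.conj x).toMonoidHom p.1.1)

/-- Equivalence classes of proper free splittings. -/
def SplitClass (F : Type) [Group F] : Type := Quot (@splitRel F _)

/-- Vertices of the ellipticity graph: classes of proper free splittings together with
nontrivial cyclic words (conjugacy classes). -/
def ZVert (F : Type) [Group F] : Type :=
  SplitClass F ⊕ {c : ConjClasses F // c ≠ ConjClasses.mk 1}

/-- The ellipticity graph `Z(F)`: a splitting class and a nontrivial cyclic word are
adjacent iff the word is elliptic to the splitting. -/
def ZGraph (F : Type) [Group F] : SimpleGraph (ZVert F) :=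
  SimpleGraph.fromRel (fun u v =>
    ∃ (s : ProperSplitting F) (c : {c : ConjClasses F // c ≠ ConjClasses.mk 1}),
      u = Sum.inl (Quot.mk _ s) ∧ v = Sum.inr c ∧ EllipticC s.1.1 s.1.2 c.1)

/-- An elementary Nielsen transformation: it sends some `a ∈ X` to `a⁻¹` or to `ab`
(`b ∈ X`, `b ≠ a`) and fixes all other elements of `X`. -/
def IsElemNielsen {X : Type} (ν : FreeGroup X ≃* FreeGroup X) : Prop :=
  ∃ a : X, (∀ x : X, x ≠ a → ν (FreeGroup.of x) = FreeGroup.of x) ∧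
    (ν (FreeGroup.of a) = (FreeGroup.of a)⁻¹ ∨
      ∃ b : X, b ≠ a ∧ ν (FreeGroup.of a) = FreeGroup.of a * FreeGroup.of b)

/-- The splitting `A * B` has basis `φ(X)`: there is a partition `X = S ⊔ T` with
`A = ⟨φ(S)⟩` and `B = ⟨φ(T)⟩`. -/
def HasBasisPartition {X : Type} (φ : FreeGroup X ≃* FreeGroup X)
    (A B : Subgroup (FreeGroup X)) : Prop :=
  ∃ S T : Set X, S ∪ T = Set.univ ∧ S ∩ T = ∅ ∧
    A = Subgroup.closure ((fun x => φ (FreeGroup.of x)) '' S) ∧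
    B = Subgroup.closure ((fun x => φ (FreeGroup.of x)) '' T)


lemma mem_of_partition {X : Type} (φ : FreeGroup X ≃* FreeGroup X)
    {A B : Subgroup (FreeGroup X)} (h : HasBasisPartition φ A B) (x : X) :
    φ (FreeGroup.of x) ∈ A ∨ φ (FreeGroup.of x) ∈ B := by
  obtain ⟨S, T, hU, -, hA, hB⟩ := h
  have hx : x ∈ S ∪ T := hU ▸ Set.mem_univ x
  rcases hx with hx | hx
  · exact Or.inl (hA ▸ Subgroup.subset_closure ⟨x, hx, rfl⟩)
  · exact Or.inr (hB ▸ Subgroup.subset_closure ⟨x, hx, rfl⟩)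

lemma dist_le_two_of_common {F : Type} [Group F]
    (s₁ s₂ : ProperSplitting F) (g : F) (hg : g ≠ 1)
    (h1 : g ∈ s₁.1.1 ∨ g ∈ s₁.1.2) (h2 : g ∈ s₂.1.1 ∨ g ∈ s₂.1.2) :
    (ZGraph F).dist (Sum.inl (Quot.mk _ s₁)) (Sum.inl (Quot.mk _ s₂)) ≤ 2 := by
  have hc : ConjClasses.mk g ≠ ConjClasses.mk (1 : F) := by
    intro h
    exact hg (isConj_one_right.mp (ConjClasses.mk_eq_mk_iff_isConj.mp h).symm)
  set c : {c : ConjClasses F // c ≠ ConjClasses.mk 1} := ⟨ConjClasses.mk g, hc⟩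
  have a1 : (ZGraph F).Adj (Sum.inl (Quot.mk _ s₁)) (Sum.inr c) := by
    refine (SimpleGraph.fromRel_adj ..).mpr ?_
    exact ⟨Sum.inl_ne_inr, Or.inl ⟨s₁, c, rfl, rfl, g, rfl, h1⟩⟩
  have a2 : (ZGraph F).Adj (Sum.inr c) (Sum.inl (Quot.mk _ s₂)) := by
    refine (SimpleGraph.fromRel_adj ..).mpr ?_
    exact ⟨Sum.inr_ne_inl, Or.inr ⟨s₂, c, rfl, rfl, g, rfl, h2⟩⟩
  exact le_trans ((ZGraph F).dist_le
    (SimpleGraph.Walk.cons a1 (SimpleGraph.Walk.cons a2 SimpleGraph.Walk.nil))) (le_of_eq rfl)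

/-- If `|X| ≥ 2`, `A * B` is a (proper) free splitting with basis `X`,
`ν` is an elementary Nielsen transformation, and `C * D` is a (proper) free splitting
with basis `ν(X)`, then some `x ∈ X` is elliptic to both splittings; in particular the
distance between `[A*B]` and `[C*D]` in the ellipticity graph is at most two. -/
theorem nielsen_distance_two {X : Type} [Fintype X] (hcard : 2 ≤ Fintype.card X)
    (A B C D : Subgroup (FreeGroup X)) (ν : FreeGroup X ≃* FreeGroup X)
    (hAB : IsFreeSplitting A B) (hA : A ≠ ⊤) (hB : B ≠ ⊤)
    (hABX : HasBasisPartition (MulEquiv.refl (FreeGroup X)) A B)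
    (hν : IsElemNielsen ν)
    (hCD : IsFreeSplitting C D) (hC : C ≠ ⊤) (hD : D ≠ ⊤)
    (hCDX : HasBasisPartition ν C D) :
    (∃ x : X, Elliptic A B (FreeGroup.of x) ∧ Elliptic C D (FreeGroup.of x)) ∧
    (ZGraph (FreeGroup X)).dist
      (Sum.inl (Quot.mk _ (⟨(A, B), hAB, hA, hB⟩ : ProperSplitting (FreeGroup X))))
      (Sum.inl (Quot.mk _ (⟨(C, D), hCD, hC, hD⟩ : ProperSplitting (FreeGroup X)))) ≤ 2 := by
  obtain ⟨a, hfix, hcase⟩ := hν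
  have key : ∃ x : X, (FreeGroup.of x ∈ A ∨ FreeGroup.of x ∈ B) ∧
      (FreeGroup.of x ∈ C ∨ FreeGroup.of x ∈ D) := by
    rcases hcase with hinv | ⟨b, hba, -⟩
    · refine ⟨a, ?_, ?_⟩
      · simpa using mem_of_partition (MulEquiv.refl (FreeGroup X)) hABX a
      · have := mem_of_partition ν hCDX a
        rw [hinv] at this
        rcases this with h | h
        · exact Or.inl (by simpa using C.inv_mem h)
        · exact Or.inr (by simpa using D.inv_mem h)
    · refine ⟨b, ?_, ?_⟩
      · simpa using mem_of_partition (MulEquiv.refl (FreeGroup X)) hABX b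
      · have := mem_of_partition ν hCDX b
        rwa [hfix b hba] at this
  obtain ⟨x, h1, h2⟩ := key
  refine ⟨⟨x, ⟨1, by simpa using h1⟩, ⟨1, by simpa using h2⟩⟩, ?_⟩
  exact dist_le_two_of_common ⟨(A, B), hAB, hA, hB⟩ ⟨(C, D), hCD, hC, hD⟩
    (FreeGroup.of x) (FreeGroup.of_ne_one x) h1 h2
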